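/- Let A be a real m×n matrix and let k ≥ 1. Suppose the restricted isometry constant δ_{2k} of A satisfies δ_{2k} < 3/(4+√6), i.e. there exists δ < 3/(4+√6) such that (1−δ)‖x‖₂² ≤ ‖Ax‖₂² ≤ (1+δ)‖x‖₂² for every 2k-sparse vector x ∈ ℝⁿ. Then every k-sparse vector x ∈ ℝⁿ satisfying A x = b̂ is the unique solution of the basis pursuit problem min ‖y‖₁ subject to A y = b̂; that is, for every y ∈ ℝⁿ with A y = b̂ and y ≠ x one has ‖y‖₁ > ‖x‖₁. -/

import Mathlib

open scoped BigOperators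

/-- A vector `x : Fin n → ℝ` is `k`-sparse if it has at most `k` nonzero entries. -/
def IsSparse {n : ℕ} (k : ℕ) (x : Fin n → ℝ) : Prop :=
  (Finset.univ.filter fun i => x i ≠ 0).card ≤ k

open Finset

/-- Sum over any set of at most `k` indices is at most the sum of the `k` largest
(for an antitone nonnegative sequence). -/
lemma aux_top_k (c : ℕ → ℝ) (hpos : ∀ i, 0 ≤ c i) (hanti : ∀ i j, i ≤ j → c j ≤ c i)
    (k : ℕ) (U : Finset ℕ) (hU : U.card ≤ k) :
    ∑ i ∈ U, c i ≤ ∑ i ∈ Finset.range k, c i := by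
  classical
  have hsplitU : ∑ i ∈ U, c i = ∑ i ∈ U ∩ range k, c i + ∑ i ∈ U \ range k, c i := by
    rw [Finset.sum_inter_add_sum_sdiff]
  have hsplitR : ∑ i ∈ range k, c i = ∑ i ∈ range k ∩ U, c i + ∑ i ∈ range k \ U, c i := by
    rw [Finset.sum_inter_add_sum_sdiff]
  have hcard : (U \ range k).card ≤ (range k \ U).card := by
    have h1 : U.card = (U ∩ range k).card + (U \ range k).card :=
      (Finset.card_inter_add_card_sdiff U (range k)).symm
    have h2 : (range k).card = (range k ∩ U).card + (range k \ U).card :=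
      (Finset.card_inter_add_card_sdiff (range k) U).symm
    have h3 : (U ∩ range k).card = (range k ∩ U).card := by rw [Finset.inter_comm]
    have h4 : (range k).card = k := Finset.card_range k
    omega
  have h5 : ∑ i ∈ U \ range k, c i ≤ (U \ range k).card * c k := by
    have := Finset.sum_le_card_nsmul (U \ range k) c (c k) ?_
    · simpa using this
    · intro i hi
      simp only [Finset.mem_sdiff, Finset.mem_range, not_lt] at hi
      exact hanti k i hi.2
  have h6 : ((range k \ U).card : ℝ) * c k ≤ ∑ i ∈ range k \ U, c i := by
    have := Finset.card_nsmul_le_sum (range k \ U) c (c k) ?_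
    · simpa using this
    · intro i hi
      simp only [Finset.mem_sdiff, Finset.mem_range] at hi
      exact hanti i k hi.1.le
  have h7 : ((U \ range k).card : ℝ) * c k ≤ ((range k \ U).card : ℝ) * c k := by
    apply mul_le_mul_of_nonneg_right _ (hpos k)
    exact_mod_cast hcard
  have h8 : ∑ i ∈ U ∩ range k, c i = ∑ i ∈ range k ∩ U, c i := by rw [Finset.inter_comm]
  linarith

/-- Consecutive blocks of size `k` combine. -/
lemma aux_blocks (f : ℕ → ℝ) (k a b : ℕ) (hab : a ≤ b) :
    ∑ j ∈ Finset.Ico a b, ∑ i ∈ Finset.Ico (j*k) ((j+1)*k), f i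
      = ∑ i ∈ Finset.Ico (a*k) (b*k), f i := by
  induction b with
  | zero => simp_all
  | succ b ih =>
    rcases Nat.lt_or_ge a (b+1) with hlt | hge
    · have hab' : a ≤ b := by omega
      rw [Finset.sum_Ico_succ_top hab', ih hab']
      exact Finset.sum_Ico_consecutive f (Nat.mul_le_mul_right k hab') (by nlinarith)
    · have : a = b + 1 := by omega
      subst this; simp

/-- Telescoping bound. -/
lemma aux_tel (c : ℕ → ℝ) (hpos : ∀ i, 0 ≤ c i) (hanti : ∀ i j, i ≤ j → c j ≤ c i)
    (k N : ℕ) (hk : 1 ≤ k) :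
    ∑ j ∈ Finset.Ico 2 N, (c (j*k) - c ((j+1)*k - 1)) ≤ c (2*k - 1) := by
  have step : ∑ j ∈ Finset.Ico 2 N, (c (j*k) - c ((j+1)*k - 1))
      ≤ ∑ j ∈ Finset.Ico 2 N, (c (j*k) - c ((j+1)*k)) := by
    apply Finset.sum_le_sum
    intro j _
    have := hanti ((j+1)*k - 1) ((j+1)*k) (by omega)
    linarith
  rcases Nat.lt_or_ge N 2 with hN | hN
  · have : Finset.Ico 2 N = ∅ := by
      apply Finset.Ico_eq_empty; omega
    rw [this]; simp [hpos]
  · have htel : ∑ j ∈ Finset.Ico 2 N, (c (j*k) - c ((j+1)*k)) = c (2*k) - c (N*k) := by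
      rw [Finset.sum_Ico_eq_sum_range]
      have : ∀ i, c ((2+i)*k) - c ((2+i+1)*k) = (fun i => c ((2+i)*k)) i - (fun i => c ((2+i)*k)) (i+1) := by
        intro i; simp only []; ring_nf
      calc ∑ i ∈ range (N-2), (c ((2+i)*k) - c ((2+i+1)*k))
          = ∑ i ∈ range (N-2), ((fun i => c ((2+i)*k)) i - (fun i => c ((2+i)*k)) (i+1)) := by
            apply Finset.sum_congr rfl; intro i _; ring_nf
        _ = c ((2+0)*k) - c ((2+(N-2))*k) := Finset.sum_range_sub' _ _
        _ = c (2*k) - c (N*k) := by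
            have h2N : 2 + (N-2) = N := by omega
            rw [h2N]
    have h1 : c (2*k) ≤ c (2*k - 1) := hanti (2*k-1) (2*k) (by omega)
    have h2 : 0 ≤ c (N*k) := hpos _
    linarith [step, htel.le, htel.ge]

/-- Improved block ℓ₂ bound: for a block of `k` entries lying in `[B,A]`,
`‖v‖₂ ≤ (‖v‖₁ + k(A-B)/4)/√k`. -/
lemma aux_block_l2 (c : ℕ → ℝ) (hpos : ∀ i, 0 ≤ c i) (hanti : ∀ i j, i ≤ j → c j ≤ c i)
    (k j : ℕ) (hk : 1 ≤ k) :
    Real.sqrt (∑ i ∈ Finset.Ico (j*k) ((j+1)*k), (c i)^2)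
      ≤ (∑ i ∈ Finset.Ico (j*k) ((j+1)*k), c i + k*(c (j*k) - c ((j+1)*k - 1))/4)
          / Real.sqrt k := by
  set Amax := c (j*k) with hA
  set Bmin := c ((j+1)*k - 1) with hB
  set P := ∑ i ∈ Finset.Ico (j*k) ((j+1)*k), c i with hP
  have hcard : (Finset.Ico (j*k) ((j+1)*k)).card = k := by
    rw [Nat.card_Ico]; ring_nf; omega
  have hjk : j*k ≤ (j+1)*k - 1 := by
    have : j*k + k = (j+1)*k := by ring
    omega
  have hAB : Bmin ≤ Amax := hanti _ _ hjk
  have hBpos : 0 ≤ Bmin := hpos _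
  have hPpos : 0 ≤ P := Finset.sum_nonneg fun i _ => hpos i
  -- each entry is in [Bmin, Amax]
  have hbound : ∑ i ∈ Finset.Ico (j*k) ((j+1)*k), (c i)^2
      ≤ (Amax + Bmin) * P - k * (Amax * Bmin) := by
    have h1 : ∑ i ∈ Finset.Ico (j*k) ((j+1)*k), (c i)^2
        ≤ ∑ i ∈ Finset.Ico (j*k) ((j+1)*k), ((Amax + Bmin) * c i - Amax * Bmin) := by
      apply Finset.sum_le_sum
      intro i hi
      simp only [Finset.mem_Ico] at hi
      have hup : c i ≤ Amax := hanti _ _ hi.1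
      have hlo : Bmin ≤ c i := hanti _ _ (by omega)
      nlinarith [mul_nonneg (sub_nonneg.2 hup) (sub_nonneg.2 hlo)]
    have h2 : ∑ i ∈ Finset.Ico (j*k) ((j+1)*k), ((Amax + Bmin) * c i - Amax * Bmin)
        = (Amax + Bmin) * P - k * (Amax * Bmin) := by
      rw [Finset.sum_sub_distrib, ← Finset.mul_sum, Finset.sum_const, hcard]
      push_cast; ring
    linarith
  have hk0 : (0:ℝ) < k := by exact_mod_cast hk
  have hsq : Real.sqrt k > 0 := Real.sqrt_pos.2 hk0
  have hRHSnum : 0 ≤ P + k*(Amax - Bmin)/4 := by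
    have : (0:ℝ) ≤ k*(Amax - Bmin)/4 := by
      have := sub_nonneg.2 hAB
      positivity
    linarith
  -- key polynomial inequality
  have hkey : k * ((Amax + Bmin) * P - k * (Amax * Bmin)) ≤ (P + k*(Amax - Bmin)/4)^2 := by
    nlinarith [sq_nonneg (P - k*(Amax + 3*Bmin)/4), mul_nonneg (mul_nonneg hk0.le hk0.le)
      (mul_nonneg hBpos (sub_nonneg.2 hAB))]
  have hsqle : ∑ i ∈ Finset.Ico (j*k) ((j+1)*k), (c i)^2
      ≤ ((P + k*(Amax - Bmin)/4) / Real.sqrt k)^2 := by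
    rw [div_pow, Real.sq_sqrt hk0.le]
    rw [le_div_iff₀ hk0]
    nlinarith [hbound, hkey]
  calc Real.sqrt (∑ i ∈ Finset.Ico (j*k) ((j+1)*k), (c i)^2)
      ≤ Real.sqrt (((P + k*(Amax - Bmin)/4) / Real.sqrt k)^2) := Real.sqrt_le_sqrt hsqle
    _ = (P + k*(Amax - Bmin)/4) / Real.sqrt k := Real.sqrt_sq (by positivity)

/-- The final cubic inequality: for `0 ≤ b ≤ a`,
`3(a+b)(a² - (3/4)b²) ≤ (1+√6)·a·(a²+b²)`. -/
lemma aux_cubic (a b : ℝ) (hb : 0 ≤ b) (hba : b ≤ a) :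
    3*(a+b)*(a^2 - (3/4)*b^2) ≤ (1 + Real.sqrt 6) * a * (a^2 + b^2) := by
  have hs : (2.449 : ℝ) ≤ Real.sqrt 6 := by
    rw [show (2.449:ℝ) = Real.sqrt (2.449^2) from (Real.sqrt_sq (by norm_num)).symm]
    apply Real.sqrt_le_sqrt; norm_num
  have ha : 0 ≤ a := le_trans hb hba
  have h1 : (1 + (2.449:ℝ)) * a * (a^2+b^2) ≤ (1 + Real.sqrt 6) * a * (a^2 + b^2) := by
    apply mul_le_mul_of_nonneg_right _ (by positivity)
    apply mul_le_mul_of_nonneg_right _ ha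
    linarith
  have h2 : 3*(a+b)*(a^2 - (3/4)*b^2) ≤ (1 + (2.449:ℝ)) * a * (a^2+b^2) := by
    nlinarith [mul_nonneg ha (sq_nonneg (a - 3.34*b)), pow_nonneg hb 3, sq_nonneg (a-b), mul_nonneg hb (sq_nonneg (a-b))]
  linarith

lemma sparse_of_support_subset {n k : ℕ} {x : Fin n → ℝ} {S : Finset (Fin n)}
    (h : ∀ i, x i ≠ 0 → i ∈ S) (hS : S.card ≤ k) : IsSparse k x := by
  unfold IsSparse
  refine le_trans (Finset.card_le_card ?_) hS
  intro i hi
  simp only [Finset.mem_filter] at hi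
  exact h i hi.2

/-- Cross inner product bound from RIP. -/
lemma aux_cross {m n k : ℕ} (A : Matrix (Fin m) (Fin n) ℝ) (δ : ℝ)
    (hRIP : ∀ z : Fin n → ℝ, IsSparse (2 * k) z →
      (1 - δ) * (∑ i, z i ^ 2) ≤ ∑ j, (A.mulVec z j) ^ 2 ∧
      ∑ j, (A.mulVec z j) ^ 2 ≤ (1 + δ) * (∑ i, z i ^ 2))
    (u v : Fin n → ℝ) (S T : Finset (Fin n))
    (hSu : ∀ i, u i ≠ 0 → i ∈ S) (hTv : ∀ i, v i ≠ 0 → i ∈ T)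
    (hcard : S.card + T.card ≤ 2*k) (hd : Disjoint S T) :
    |∑ j, A.mulVec u j * A.mulVec v j|
      ≤ δ * Real.sqrt (∑ i, u i^2) * Real.sqrt (∑ i, v i^2) := by
  classical
  set α := Real.sqrt (∑ i, u i^2) with hα
  set β := Real.sqrt (∑ i, v i^2) with hβ
  have hα0 : 0 ≤ α := Real.sqrt_nonneg _
  have hβ0 : 0 ≤ β := Real.sqrt_nonneg _
  have hu2 : ∑ i, u i^2 = α^2 := (Real.sq_sqrt (Finset.sum_nonneg fun i _ => sq_nonneg _)).symm
  have hv2 : ∑ i, v i^2 = β^2 := (Real.sq_sqrt (Finset.sum_nonneg fun i _ => sq_nonneg _)).symm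
  -- degenerate cases
  by_cases hαz : α = 0
  · have : ∀ i, u i = 0 := by
      intro i
      have hsum : ∑ i, u i ^2 = 0 := by rw [hu2, hαz]; ring
      have := (Finset.sum_eq_zero_iff_of_nonneg (fun i _ => sq_nonneg (u i))).1 hsum i (Finset.mem_univ i)
      exact pow_eq_zero_iff (by norm_num) |>.1 this
    have hmv : A.mulVec u = 0 := by
      funext j
      simp [Matrix.mulVec, dotProduct, this]
    rw [hmv]
    simp [hαz]
  by_cases hβz : β = 0
  · have : ∀ i, v i = 0 := by
      intro i
      have hsum : ∑ i, v i ^2 = 0 := by rw [hv2, hβz]; ring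
      have := (Finset.sum_eq_zero_iff_of_nonneg (fun i _ => sq_nonneg (v i))).1 hsum i (Finset.mem_univ i)
      exact pow_eq_zero_iff (by norm_num) |>.1 this
    have hmv : A.mulVec v = 0 := by
      funext j
      simp [Matrix.mulVec, dotProduct, this]
    rw [hmv]
    simp [hβz]
  have hαpos : 0 < α := lt_of_le_of_ne hα0 (Ne.symm hαz)
  have hβpos : 0 < β := lt_of_le_of_ne hβ0 (Ne.symm hβz)
  -- orthogonality of u and v
  have horth : ∑ i, u i * v i = 0 := by
    apply Finset.sum_eq_zero
    intro i _
    by_cases hui : u i = 0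
    · simp [hui]
    · have hiS := hSu i hui
      have hvi : v i = 0 := by
        by_contra hvi
        exact (Finset.disjoint_left.1 hd hiS) (hTv i hvi)
      simp [hvi]
  -- sparse combinations
  have hsp : ∀ (s t : ℝ), IsSparse (2*k) (s • u + t • v) := by
    intro s t
    apply sparse_of_support_subset (S := S ∪ T)
    · intro i hi
      simp only [Pi.add_apply, Pi.smul_apply, smul_eq_mul] at hi
      by_cases hui : u i = 0
      · have : v i ≠ 0 := by
          intro hvi; apply hi; rw [hui, hvi]; ring
        exact Finset.mem_union_right _ (hTv i this)
      · exact Finset.mem_union_left _ (hSu i hui)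
    · exact le_trans (Finset.card_union_le _ _) hcard
  -- apply RIP to z₊ = β•u + α•v and z₋ = β•u + (-α)•v
  obtain ⟨hp1, hp2⟩ := hRIP (β • u + α • v) (hsp β α)
  obtain ⟨hm1, hm2⟩ := hRIP (β • u + (-α) • v) (hsp β (-α))
  have hmvp : ∀ j, A.mulVec (β • u + α • v) j = β * A.mulVec u j + α * A.mulVec v j := by
    intro j
    rw [Matrix.mulVec_add, Matrix.mulVec_smul, Matrix.mulVec_smul]
    simp
  have hmvm : ∀ j, A.mulVec (β • u + (-α) • v) j = β * A.mulVec u j - α * A.mulVec v j := by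
    intro j
    rw [Matrix.mulVec_add, Matrix.mulVec_smul, Matrix.mulVec_smul]
    simp; ring
  set B := ∑ j, A.mulVec u j * A.mulVec v j with hBdef
  set Qu := ∑ j, (A.mulVec u j)^2 with hQu
  set Qv := ∑ j, (A.mulVec v j)^2 with hQv
  have hQp : ∑ j, (A.mulVec (β • u + α • v) j)^2 = β^2*Qu + α^2*Qv + 2*α*β*B := by
    rw [hQu, hQv, hBdef]
    rw [Finset.mul_sum, Finset.mul_sum, Finset.mul_sum, ← Finset.sum_add_distrib, ← Finset.sum_add_distrib]
    apply Finset.sum_congr rfl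
    intro j _
    rw [hmvp j]; ring
  have hQm : ∑ j, (A.mulVec (β • u + (-α) • v) j)^2 = β^2*Qu + α^2*Qv - 2*α*β*B := by
    rw [hQu, hQv, hBdef]
    rw [Finset.mul_sum, Finset.mul_sum, Finset.mul_sum]
    rw [← Finset.sum_add_distrib, ← Finset.sum_sub_distrib]
    apply Finset.sum_congr rfl
    intro j _
    rw [hmvm j]; ring
  have hnp : ∑ i, (β • u + α • v) i ^2 = 2*α^2*β^2 := by
    have : ∀ i, (β • u + α • v) i ^2 = β^2 * u i^2 + α^2 * v i^2 + 2*α*β*(u i * v i) := by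
      intro i; simp only [Pi.add_apply, Pi.smul_apply, smul_eq_mul]; ring
    rw [Finset.sum_congr rfl (fun i _ => this i)]
    rw [Finset.sum_add_distrib, Finset.sum_add_distrib, ← Finset.mul_sum, ← Finset.mul_sum, ← Finset.mul_sum]
    rw [hu2, hv2, horth]; ring
  have hnm : ∑ i, (β • u + (-α) • v) i ^2 = 2*α^2*β^2 := by
    have : ∀ i, (β • u + (-α) • v) i ^2 = β^2 * u i^2 + α^2 * v i^2 - 2*α*β*(u i * v i) := by
      intro i; simp only [Pi.add_apply, Pi.smul_apply, smul_eq_mul]; ring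
    rw [Finset.sum_congr rfl (fun i _ => this i)]
    rw [Finset.sum_sub_distrib, Finset.sum_add_distrib, ← Finset.mul_sum, ← Finset.mul_sum, ← Finset.mul_sum]
    rw [hu2, hv2, horth]; ring
  rw [hQp, hnp] at hp1 hp2
  rw [hQm, hnm] at hm1 hm2
  -- |B| ≤ δ α β
  rw [abs_le]
  constructor
  · -- -δαβ ≤ B : from hp1 and hm2
    nlinarith [mul_pos hαpos hβpos]
  · nlinarith [mul_pos hαpos hβpos]

/-- Reindexing sums via the sorting permutation. -/
lemma aux_reindex {n : ℕ} (h : Fin n → ℝ) (σ : Equiv.Perm (Fin n))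
    (c : ℕ → ℝ) (hcdef : ∀ (i : ℕ) (hi : i < n), c i = |h (σ ⟨i, hi⟩)|)
    (hczero : ∀ i, n ≤ i → c i = 0)
    (F : ℝ → ℝ) (hF : F 0 = 0) (a b : ℕ) :
    ∑ i ∈ Finset.univ.filter
        (fun i : Fin n => a ≤ ((σ.symm i : Fin n) : ℕ) ∧ ((σ.symm i : Fin n) : ℕ) < b),
        F |h i|
      = ∑ i ∈ Finset.Ico a b, F (c i) := by
  classical
  rcases Nat.eq_zero_or_pos n with hn | hn
  · subst hn
    rw [Finset.sum_eq_zero, Finset.sum_eq_zero]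
    · intro i _; rw [hczero i (Nat.zero_le i), hF]
    · intro i _; exact absurd i.isLt (by omega)
  haveI : Nonempty (Fin n) := ⟨⟨0, hn⟩⟩
  have hstep : ∑ i ∈ Finset.Ico a b, F (c i)
      = ∑ i ∈ (Finset.Ico a b).filter (fun i => i < n), F (c i) := by
    symm
    apply Finset.sum_subset (Finset.filter_subset _ _)
    intro i hi hni
    simp only [Finset.mem_filter, not_and, not_lt] at hni
    rw [hczero i (hni hi), hF]
  rw [hstep]
  apply Finset.sum_nbij' (i := fun (i : Fin n) => ((σ.symm i : Fin n) : ℕ))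
    (j := fun (i : ℕ) => if hi : i < n then σ ⟨i, hi⟩ else σ.symm.symm (Classical.arbitrary (Fin n)))
  · intro i hi
    simp only [Finset.mem_filter, Finset.mem_univ, true_and] at hi
    simp only [Finset.mem_filter, Finset.mem_Ico]
    exact ⟨⟨hi.1, hi.2⟩, (σ.symm i).isLt⟩
  · intro i hi
    simp only [Finset.mem_filter, Finset.mem_Ico] at hi
    rw [dif_pos hi.2]
    simp only [Finset.mem_filter, Finset.mem_univ, true_and, Equiv.symm_apply_apply]
    exact ⟨hi.1.1, hi.1.2⟩
  · intro i hi
    simp only [Finset.mem_filter, Finset.mem_univ, true_and] at hi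
    rw [dif_pos (σ.symm i).isLt]
    simp
  · intro i hi
    simp only [Finset.mem_filter, Finset.mem_Ico] at hi
    rw [dif_pos hi.2]
    simp
  · intro i hi
    simp only [Finset.mem_filter, Finset.mem_univ, true_and] at hi
    rw [hcdef ((σ.symm i : Fin n) : ℕ) (σ.symm i).isLt]
    congr 2
    simp

set_option maxHeartbeats 1000000 in
/-- Final scalar contradiction. -/
lemma aux_final (δ sk a b p0 p1 Sa : ℝ)
    (hδ0 : 0 ≤ δ) (hδs : δ * (4 + Real.sqrt 6) < 3)
    (hskpos : 0 < sk)
    (ha : 0 < a) (hb : 0 ≤ b) (hba : b ≤ a)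
    (hp0 : 0 ≤ p0) (hp1 : 0 ≤ p1)
    (hSab : Sa ≤ (p0 - 3/4 * p1) / sk)
    (hp0a : p0 ≤ sk * a)
    (hb2 : b^2 * (sk*sk) ≤ p0 * p1)
    (hmain : (1 - δ) * (a^2 + b^2) ≤ δ * (a + b) * Sa) : False := by
  have habnn : (0:ℝ) ≤ a + b := by linarith
  have hfac : 0 ≤ δ * (a + b) := mul_nonneg hδ0 habnn
  have step2 : (1-δ)*(a^2+b^2) ≤ δ*(a+b)*((p0 - 3/4*p1)/sk) :=
    le_trans hmain (mul_le_mul_of_nonneg_left hSab hfac)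
  have step3 : (1-δ)*(a^2+b^2)*sk ≤ δ*(a+b)*(p0 - 3/4*p1) := by
    have h := mul_le_mul_of_nonneg_right step2 hskpos.le
    have he : δ*(a+b)*((p0 - 3/4*p1)/sk)*sk = δ*(a+b)*(p0 - 3/4*p1) := by
      field_simp
    rw [he] at h
    exact h
  have step4 : δ*(a+b)*(p0 - 3/4*p1) ≤ δ*(a+b)*(sk*a - 3/4*p1) :=
    mul_le_mul_of_nonneg_left (by linarith) hfac
  have hskb2 : sk*b^2 ≤ a*p1 := by
    have h1 : p0 * p1 ≤ (sk*a) * p1 := mul_le_mul_of_nonneg_right hp0a hp1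
    nlinarith [hb2, hskpos]
  have final1 : (1-δ)*(a^2+b^2)*sk*a ≤ δ*(a+b)*(sk*(a^2 - 3/4*b^2)) := by
    have h1 : (1-δ)*(a^2+b^2)*sk*a ≤ δ*(a+b)*(sk*a - 3/4*p1)*a :=
      mul_le_mul_of_nonneg_right (le_trans step3 step4) ha.le
    have h2 : (sk*a - 3/4*p1)*a ≤ sk*(a^2 - 3/4*b^2) := by nlinarith [hskb2]
    have h3 : δ*(a+b)*((sk*a - 3/4*p1)*a) ≤ δ*(a+b)*(sk*(a^2 - 3/4*b^2)) :=
      mul_le_mul_of_nonneg_left h2 hfac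
    nlinarith [h1, h3]
  have final2 : (1-δ)*(a^2+b^2)*a ≤ δ*(a+b)*(a^2 - 3/4*b^2) := by
    nlinarith [final1, hskpos]
  have hcub := aux_cubic a b hb hba
  have hδcub : δ*(3*(a+b)*(a^2 - (3/4)*b^2)) ≤ δ*((1 + Real.sqrt 6)*a*(a^2+b^2)) :=
    mul_le_mul_of_nonneg_left hcub hδ0
  have hApos : 0 < a*(a^2+b^2) := by positivity
  have hkey : 0 < (3 - δ*(4 + Real.sqrt 6)) * (a*(a^2+b^2)) :=
    mul_pos (by linarith) hApos
  nlinarith [final2, hδcub, hkey]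
set_option maxHeartbeats 1000000 in
/-- If the restricted isometry constant `δ_{2k}` of `A` is below
`3/(4+√6)`, then every `k`-sparse solution of `A x = b̂` is the unique `ℓ₁` minimizer. -/
theorem rip_implies_unique_l1_recovery
    (m n k : ℕ) (hk : 1 ≤ k) (A : Matrix (Fin m) (Fin n) ℝ)
    (δ : ℝ) (hδ : δ < 3 / (4 + Real.sqrt 6))
    (hRIP : ∀ z : Fin n → ℝ, IsSparse (2 * k) z →
      (1 - δ) * (∑ i, z i ^ 2) ≤ ∑ j, (A.mulVec z j) ^ 2 ∧
      ∑ j, (A.mulVec z j) ^ 2 ≤ (1 + δ) * (∑ i, z i ^ 2))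
    (x : Fin n → ℝ) (hx : IsSparse k x)
    (b : Fin m → ℝ) (hAx : A.mulVec x = b) :
    ∀ y : Fin n → ℝ, A.mulVec y = b → y ≠ x → ∑ i, |x i| < ∑ i, |y i| := by
  classical
  intro y hAy hne
  by_contra hcon
  push_neg at hcon
  -- the null space vector
  set h : Fin n → ℝ := fun i => y i - x i with hhdef
  have hAh : A.mulVec h = 0 := by
    have : h = y - x := rfl
    rw [this, Matrix.mulVec_sub, hAy, hAx]
    simp
  have hne0 : ∃ i, h i ≠ 0 := by
    by_contra hall
    push_neg at hall
    apply hne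
    funext i
    have := hall i
    simp only [hhdef] at this
    linarith [sub_eq_zero.1 this]
  obtain ⟨i₀, hi₀⟩ := hne0
  -- δ is nonnegative
  have hδ0 : 0 ≤ δ := by
    set z : Fin n → ℝ := fun i => if i = i₀ then 1 else 0 with hzdef
    have hzsp : IsSparse (2*k) z := by
      apply sparse_of_support_subset (S := {i₀})
      · intro i hi
        simp only [hzdef] at hi
        by_contra hii
        simp only [Finset.mem_singleton] at hii
        rw [if_neg hii] at hi
        exact hi rfl
      · simp; omega
    obtain ⟨hz1, hz2⟩ := hRIP z hzsp
    have hzsum : ∑ i, z i ^2 = 1 := by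
      have : ∀ i, z i ^2 = if i = i₀ then 1 else 0 := by
        intro i; simp only [hzdef]; split <;> norm_num
      rw [Finset.sum_congr rfl (fun i _ => this i)]
      simp
    rw [hzsum] at hz1 hz2
    linarith
  -- √6 facts
  set s6 : ℝ := Real.sqrt 6 with hs6
  have hs6pos : 0 ≤ s6 := Real.sqrt_nonneg _
  have hδs : δ * (4 + s6) < 3 := by
    have h4 : (0:ℝ) < 4 + s6 := by linarith
    exact (lt_div_iff₀ h4).1 hδ
  -- the sorted sequence
  set σ : Equiv.Perm (Fin n) := Tuple.sort (fun i => -|h i|) with hσdef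
  set c : ℕ → ℝ := fun i => if hi : i < n then |h (σ ⟨i, hi⟩)| else 0 with hcdef0
  have hcdef : ∀ (i : ℕ) (hi : i < n), c i = |h (σ ⟨i, hi⟩)| := fun i hi => dif_pos hi
  have hczero : ∀ i, n ≤ i → c i = 0 := fun i hi => dif_neg (by omega)
  have hcpos : ∀ i, 0 ≤ c i := by
    intro i
    by_cases hi : i < n
    · rw [hcdef i hi]; positivity
    · rw [hczero i (by omega)]
  have hcanti : ∀ i j, i ≤ j → c j ≤ c i := by
    intro i j hij
    rcases Nat.lt_or_ge j n with hj | hj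
    · have hi : i < n := lt_of_le_of_lt hij hj
      rw [hcdef i hi, hcdef j hj]
      have := Tuple.monotone_sort (fun i => -|h i|)
        (show (⟨i, hi⟩ : Fin n) ≤ ⟨j, hj⟩ from hij)
      simp only [Function.comp_apply] at this
      rw [← hσdef] at this
      linarith
    · rw [hczero j hj]
      exact hcpos i
  have hch : ∀ i : Fin n, |h i| = c ((σ.symm i : Fin n) : ℕ) := by
    intro i
    rw [hcdef _ (σ.symm i).isLt]
    congr 2
    simp
  -- blocks
  set N : ℕ := n + 2 with hNdef
  set T : ℕ → Finset (Fin n) := fun j => Finset.univ.filter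
    (fun i : Fin n => j*k ≤ ((σ.symm i : Fin n) : ℕ) ∧ ((σ.symm i : Fin n) : ℕ) < (j+1)*k)
    with hTdef
  have hmem : ∀ (i : Fin n) (j : ℕ), i ∈ T j ↔ ((σ.symm i : Fin n) : ℕ) / k = j := by
    intro i j
    simp only [hTdef, Finset.mem_filter, Finset.mem_univ, true_and]
    constructor
    · rintro ⟨h1, h2⟩
      exact Nat.div_eq_of_lt_le h1 h2
    · rintro rfl
      refine ⟨Nat.div_mul_le_self _ _, ?_⟩
      exact (Nat.div_lt_iff_lt_mul (by omega : 0 < k)).1 (Nat.lt_succ_self _)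
  have hTcard : ∀ j, (T j).card ≤ k := by
    intro j
    have : (T j).card ≤ (Finset.Ico (j*k) ((j+1)*k)).card := by
      apply Finset.card_le_card_of_injOn (fun i => ((σ.symm i : Fin n) : ℕ))
      · intro i hi
        simp only [hTdef, Finset.mem_filter, Finset.mem_univ, true_and] at hi
        simp only [Finset.mem_Ico]
        simpa using hi
      · intro i _ i' _ hii
        have : σ.symm i = σ.symm i' := Fin.ext hii
        exact σ.symm.injective this
    rw [Nat.card_Ico] at this
    have hkk : (j+1)*k = j*k + k := by ring
    omega
  have hdisjT : ∀ j j', j ≠ j' → Disjoint (T j) (T j') := by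
    intro j j' hjj
    rw [Finset.disjoint_left]
    intro i hi hi'
    rw [hmem] at hi hi'
    omega
  set hv : ℕ → Fin n → ℝ := fun j i => if i ∈ T j then h i else 0 with hvdef
  have hsupp : ∀ j i, hv j i ≠ 0 → i ∈ T j := by
    intro j i hi
    simp only [hvdef] at hi
    by_contra hii
    rw [if_neg hii] at hi
    exact hi rfl
  -- block sums
  set p : ℕ → ℝ := fun j => ∑ i ∈ Finset.Ico (j*k) ((j+1)*k), c i with hpdef
  set sq : ℕ → ℝ := fun j => ∑ i ∈ Finset.Ico (j*k) ((j+1)*k), (c i)^2 with hsqdef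
  set av : ℕ → ℝ := fun j => Real.sqrt (sq j) with havdef
  have hpnn : ∀ j, 0 ≤ p j := fun j => Finset.sum_nonneg (fun i _ => hcpos i)
  have hsqnn : ∀ j, 0 ≤ sq j := fun j => Finset.sum_nonneg (fun i _ => sq_nonneg _)
  have havnn : ∀ j, 0 ≤ av j := fun j => Real.sqrt_nonneg _
  have hTl1 : ∀ j, ∑ i ∈ T j, |h i| = p j := by
    intro j
    exact aux_reindex h σ c hcdef hczero (fun t => t) rfl (j*k) ((j+1)*k)
  have hTsq : ∀ j, ∑ i ∈ T j, (h i)^2 = sq j := by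
    intro j
    have h2 := aux_reindex h σ c hcdef hczero (fun t => t^2) (by norm_num) (j*k) ((j+1)*k)
    have h3 : ∑ i ∈ T j, (h i)^2 = ∑ i ∈ T j, |h i|^2 :=
      Finset.sum_congr rfl (fun i _ => (sq_abs _).symm)
    rw [h3]
    exact h2
  have hvsum : ∀ l, ∑ i, (hv l i) ^2 = sq l := by
    intro l
    rw [← hTsq l]
    rw [show (∑ i, (hv l i)^2) = ∑ i, (if i ∈ T l then (h i)^2 else 0) from
      Finset.sum_congr rfl (fun i _ => by simp only [hvdef]; split <;> norm_num)]
    rw [Finset.sum_ite_mem, Finset.univ_inter]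
  -- ℓ₁ null space inequality
  set Tx : Finset (Fin n) := Finset.univ.filter (fun i => x i ≠ 0) with hTxdef
  set Txc : Finset (Fin n) := Finset.univ.filter (fun i => ¬ x i ≠ 0) with hTxcdef
  have hsplit : ∀ g : Fin n → ℝ, ∑ i ∈ Tx, g i + ∑ i ∈ Txc, g i = ∑ i, g i := by
    intro g
    exact Finset.sum_filter_add_sum_filter_not _ _ g
  have hl1 : ∑ i ∈ Txc, |h i| ≤ ∑ i ∈ Tx, |h i| := by
    have h1 : ∑ i ∈ Tx, (|x i| - |h i|) ≤ ∑ i ∈ Tx, |y i| := by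
      apply Finset.sum_le_sum
      intro i _
      have : |x i| - |y i| ≤ |x i - y i| := abs_sub_abs_le_abs_sub _ _
      have h2 : |x i - y i| = |h i| := by
        rw [show h i = y i - x i from rfl, abs_sub_comm]
      linarith
    have h2 : ∑ i ∈ Txc, |h i| = ∑ i ∈ Txc, |y i| := by
      apply Finset.sum_congr rfl
      intro i hi
      simp only [hTxcdef, Finset.mem_filter, not_not] at hi
      rw [show h i = y i - x i from rfl, hi.2, sub_zero]
    have h3 : ∑ i ∈ Txc, |x i| = 0 := by
      apply Finset.sum_eq_zero
      intro i hi
      simp only [hTxcdef, Finset.mem_filter, not_not] at hi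
      rw [hi.2, abs_zero]
    have h4 := hsplit (fun i => |y i|)
    have h5 := hsplit (fun i => |x i|)
    rw [Finset.sum_sub_distrib] at h1
    beta_reduce at h4 h5
    linarith
  -- top-k bound
  have htopk : ∑ i ∈ Tx, |h i| ≤ ∑ i ∈ Finset.range k, c i := by
    set U : Finset ℕ := Tx.image (fun i => ((σ.symm i : Fin n) : ℕ)) with hUdef
    have hinj : Set.InjOn (fun i => ((σ.symm i : Fin n) : ℕ)) Tx := by
      intro i _ i' _ hii
      exact σ.symm.injective (Fin.ext hii)
    have hUsum : ∑ i ∈ Tx, |h i| = ∑ u ∈ U, c u := by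
      rw [hUdef, Finset.sum_image (fun i hi i' hi' => hinj hi hi')]
      exact Finset.sum_congr rfl (fun i _ => hch i)
    have hUcard : U.card ≤ k := le_trans (Finset.card_image_le) hx
    rw [hUsum]
    exact aux_top_k c hcpos hcanti k U hUcard
  -- total ℓ₁ in terms of c
  have htotc : ∑ i, |h i| = ∑ i ∈ Finset.Ico 0 (N*k), c i := by
    have hfilt : Finset.univ.filter
        (fun i : Fin n => 0 ≤ ((σ.symm i : Fin n) : ℕ) ∧ ((σ.symm i : Fin n) : ℕ) < N*k)
        = Finset.univ := by
      apply Finset.filter_true_of_mem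
      intro i _
      refine ⟨Nat.zero_le _, ?_⟩
      have h1 : ((σ.symm i : Fin n) : ℕ) < n := (σ.symm i).isLt
      have h2 : n < N*k := by
        have : N*k = (n+2)*k := by rw [hNdef]
        nlinarith [Nat.mul_le_mul_left (n+2) hk]
      omega
    have := aux_reindex h σ c hcdef hczero (fun t => t) rfl 0 (N*k)
    rw [hfilt] at this
    exact this
  -- block decomposition of the total
  have hblocks : ∑ j ∈ Finset.Ico 0 N, p j = ∑ i ∈ Finset.Ico 0 (N*k), c i := by
    have := aux_blocks c k 0 N (Nat.zero_le N)
    simpa using this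
  have hNge2 : 2 ≤ N := by omega
  have hsplit01 : ∑ j ∈ Finset.Ico 0 N, p j = p 0 + ∑ j ∈ Finset.Ico 1 N, p j := by
    rw [← Finset.sum_Ico_consecutive (fun j => p j) (by omega : 0 ≤ 1) (by omega : 1 ≤ N)]
    norm_num
  have hsplit12 : ∑ j ∈ Finset.Ico 1 N, p j = p 1 + ∑ j ∈ Finset.Ico 2 N, p j := by
    rw [← Finset.sum_Ico_consecutive (fun j => p j) (by omega : 1 ≤ 2) (by omega : 2 ≤ N)]
    congr 1
    rw [show Finset.Ico 1 2 = {1} from rfl]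
    simp
  have hp0r : p 0 = ∑ i ∈ Finset.range k, c i := by
    rw [hpdef]
    simp only []
    rw [Finset.range_eq_Ico]
    norm_num
  -- key ℓ₁ consequences
  have hrest1 : ∑ j ∈ Finset.Ico 1 N, p j ≤ p 0 := by
    have h1 : ∑ i, |h i| ≤ 2 * ∑ i ∈ Tx, |h i| := by
      have := hsplit (fun i => |h i|)
      linarith
    have h2 : ∑ i, |h i| ≤ 2 * p 0 := by
      rw [hp0r]; linarith
    rw [htotc, ← hblocks, hsplit01] at h2
    linarith
  have hrest2 : ∑ j ∈ Finset.Ico 2 N, p j ≤ p 0 - p 1 := by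
    rw [hsplit12] at hrest1
    linarith
  -- block ℓ₂ bounds and telescoping
  have hk0 : (0:ℝ) < k := by exact_mod_cast hk
  set sk : ℝ := Real.sqrt k with hskdef
  have hskpos : 0 < sk := Real.sqrt_pos.2 hk0
  have hsk2 : sk^2 = k := Real.sq_sqrt hk0.le
  set Sa : ℝ := ∑ j ∈ Finset.Ico 2 N, av j with hSadef
  have hSann : 0 ≤ Sa := Finset.sum_nonneg (fun j _ => havnn j)
  have hSab : Sa ≤ (p 0 - (3/4) * p 1) / sk := by
    have h1 : Sa ≤ ∑ j ∈ Finset.Ico 2 N,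
        ((p j + k*(c (j*k) - c ((j+1)*k - 1))/4) / sk) := by
      apply Finset.sum_le_sum
      intro j _
      exact aux_block_l2 c hcpos hcanti k j hk
    have h2 : ∑ j ∈ Finset.Ico 2 N, ((p j + k*(c (j*k) - c ((j+1)*k - 1))/4) / sk)
        = (∑ j ∈ Finset.Ico 2 N, p j
            + (k/4) * ∑ j ∈ Finset.Ico 2 N, (c (j*k) - c ((j+1)*k - 1))) / sk := by
      rw [← Finset.sum_div]
      congr 1
      rw [Finset.mul_sum, ← Finset.sum_add_distrib]
      apply Finset.sum_congr rfl
      intro j _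
      ring
    have h3 : ∑ j ∈ Finset.Ico 2 N, (c (j*k) - c ((j+1)*k - 1)) ≤ c (2*k - 1) :=
      aux_tel c hcpos hcanti k N hk
    have h4 : (k:ℝ) * c (2*k - 1) ≤ p 1 := by
      have := Finset.card_nsmul_le_sum (Finset.Ico (1*k) ((1+1)*k)) c (c (2*k-1)) ?_
      · have hcard : (Finset.Ico (1*k) ((1+1)*k)).card = k := by
          rw [Nat.card_Ico]; omega
        rw [hcard] at this
        have hp1 : p 1 = ∑ i ∈ Finset.Ico k (2*k), c i := by
          rw [hpdef]
          norm_num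
        rw [hp1]
        simpa using this
      · intro i hi
        simp only [Finset.mem_Ico] at hi
        apply hcanti
        omega
    have h5 : (∑ j ∈ Finset.Ico 2 N, p j
            + (k/4) * ∑ j ∈ Finset.Ico 2 N, (c (j*k) - c ((j+1)*k - 1))) / sk
        ≤ (p 0 - (3/4) * p 1) / sk := by
      have h6 : (k/4:ℝ) * (∑ j ∈ Finset.Ico 2 N, (c (j*k) - c ((j+1)*k - 1)))
          ≤ (k/4) * c (2*k-1) := mul_le_mul_of_nonneg_left h3 (by positivity)
      have h7 : ∑ j ∈ Finset.Ico 2 N, p j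
            + (k/4) * ∑ j ∈ Finset.Ico 2 N, (c (j*k) - c ((j+1)*k - 1))
          ≤ p 0 - (3/4) * p 1 := by linarith
      exact (div_le_div_iff_of_pos_right hskpos).2 h7
    calc Sa ≤ _ := h1
      _ = _ := h2
      _ ≤ _ := h5
  -- Cauchy–Schwarz: p 0 ≤ sk * av 0
  have hp0a : p 0 ≤ sk * av 0 := by
    have hcs := Finset.sum_mul_sq_le_sq_mul_sq (Finset.Ico (0*k) ((0+1)*k)) c (fun _ => (1:ℝ))
    have hone : ∑ i ∈ Finset.Ico (0*k) ((0+1)*k), ((1:ℝ))^2 = (k:ℝ) := by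
      rw [Finset.sum_const, Nat.card_Ico]
      norm_num
    have hc1 : ∑ i ∈ Finset.Ico (0*k) ((0+1)*k), c i * (1:ℝ) = p 0 := by
      rw [hpdef]
      simp
    rw [hc1, hone] at hcs
    -- hcs : (p 0)^2 ≤ sq 0 * k
    have hsq0 : ∑ i ∈ Finset.Ico (0*k) ((0+1)*k), (c i)^2 = sq 0 := rfl
    rw [hsq0] at hcs
    have h1 : p 0 = Real.sqrt ((p 0)^2) := (Real.sqrt_sq (hpnn 0)).symm
    rw [h1]
    calc Real.sqrt ((p 0)^2) ≤ Real.sqrt ((k:ℝ) * sq 0) := by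
          apply Real.sqrt_le_sqrt
          linarith
      _ = sk * av 0 := by
          rw [Real.sqrt_mul hk0.le]
  -- sq 1 bound : sq 1 * k ≤ p 0 * p 1
  have hb2 : sq 1 * k ≤ p 0 * p 1 := by
    have h1 : sq 1 ≤ c k * p 1 := by
      have : ∀ i ∈ Finset.Ico (1*k) ((1+1)*k), (c i)^2 ≤ c k * c i := by
        intro i hi
        simp only [Finset.mem_Ico] at hi
        have hik : c i ≤ c k := hcanti k i (by omega)
        nlinarith [hcpos i]
      calc sq 1 ≤ ∑ i ∈ Finset.Ico (1*k) ((1+1)*k), c k * c i :=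
            Finset.sum_le_sum this
        _ = c k * p 1 := by rw [← Finset.mul_sum]
    have h2 : (k:ℝ) * c k ≤ p 0 := by
      have := Finset.card_nsmul_le_sum (Finset.Ico (0*k) ((0+1)*k)) c (c k) ?_
      · have hcard : (Finset.Ico (0*k) ((0+1)*k)).card = k := by
          rw [Nat.card_Ico]; omega
        rw [hcard] at this
        rw [hp0r]
        simpa using this
      · intro i hi
        simp only [Finset.mem_Ico] at hi
        exact hcanti i k (by omega)
    have hckpos : 0 ≤ c k := hcpos k
    have h3 : sq 1 * k ≤ (c k * p 1) * k := mul_le_mul_of_nonneg_right h1 hk0.le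
    have h4 : ((k:ℝ) * c k) * p 1 ≤ p 0 * p 1 := mul_le_mul_of_nonneg_right h2 (hpnn 1)
    nlinarith
  -- av 1 ≤ av 0
  have hba : av 1 ≤ av 0 := by
    apply Real.sqrt_le_sqrt
    have h1 : sq 1 = ∑ i ∈ Finset.range k, (c (k + i))^2 := by
      rw [hsqdef]
      simp only []
      rw [Finset.sum_Ico_eq_sum_range]
      norm_num
      rw [show 2*k - k = k by omega]
    have h2 : sq 0 = ∑ i ∈ Finset.range k, (c i)^2 := by
      rw [hsqdef]
      simp only []
      rw [Finset.range_eq_Ico]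
      norm_num
    rw [h1, h2]
    apply Finset.sum_le_sum
    intro i _
    have := hcanti i (k+i) (by omega)
    nlinarith [hcpos (k+i)]
  -- positivity of av 0
  have hav0pos : 0 < av 0 := by
    have htot_pos : 0 < ∑ i, |h i| := by
      apply Finset.sum_pos' (fun i _ => abs_nonneg _)
      exact ⟨i₀, Finset.mem_univ i₀, abs_pos.2 hi₀⟩
    have h2 : ∑ i, |h i| ≤ 2 * p 0 := by
      rw [htotc, ← hblocks, hsplit01]
      linarith
    have hp0pos : 0 < p 0 := by linarith
    nlinarith [havnn 0]
  -- the 2k-sparse head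
  set u : Fin n → ℝ := fun i => hv 0 i + hv 1 i with hudef
  have hu_sp : IsSparse (2*k) u := by
    apply sparse_of_support_subset (S := T 0 ∪ T 1)
    · intro i hi
      simp only [hudef] at hi
      by_cases h0 : hv 0 i = 0
      · have h1 : hv 1 i ≠ 0 := by
          intro h1; apply hi; rw [h0, h1]; ring
        exact Finset.mem_union_right _ (hsupp 1 i h1)
      · exact Finset.mem_union_left _ (hsupp 0 i h0)
    · calc (T 0 ∪ T 1).card ≤ (T 0).card + (T 1).card := Finset.card_union_le _ _
        _ ≤ 2*k := by have := hTcard 0; have := hTcard 1; omega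
  have hucross : ∀ i, hv 0 i * hv 1 i = 0 := by
    intro i
    by_cases h0 : hv 0 i = 0
    · rw [h0, zero_mul]
    · have hiT0 : i ∈ T 0 := hsupp 0 i h0
      have hiT1 : i ∉ T 1 := Finset.disjoint_left.1 (hdisjT 0 1 (by omega)) hiT0
      have : hv 1 i = 0 := by
        simp only [hvdef]
        rw [if_neg hiT1]
      rw [this, mul_zero]
  have husum : ∑ i, u i ^2 = sq 0 + sq 1 := by
    have h1 : ∀ i, u i^2 = hv 0 i^2 + hv 1 i^2 := by
      intro i
      have := hucross i
      simp only [hudef]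
      nlinarith [hucross i]
    rw [Finset.sum_congr rfl (fun i _ => h1 i), Finset.sum_add_distrib, hvsum 0, hvsum 1]
  -- partition of h
  have hpart : ∀ i, ∑ j ∈ Finset.range N, hv j i = h i := by
    intro i
    set j₀ : ℕ := ((σ.symm i : Fin n) : ℕ) / k with hj₀def
    have hj₀N : j₀ < N := by
      have h1 : j₀ ≤ ((σ.symm i : Fin n) : ℕ) := Nat.div_le_self _ _
      have h2 : ((σ.symm i : Fin n) : ℕ) < n := (σ.symm i).isLt
      omega
    rw [Finset.sum_eq_single_of_mem j₀ (Finset.mem_range.2 hj₀N)]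
    · simp only [hvdef]
      rw [if_pos ((hmem i j₀).2 rfl)]
    · intro j _ hjj
      simp only [hvdef]
      rw [if_neg]
      intro hiT
      exact hjj (((hmem i j).1 hiT).symm.trans hj₀def.symm)
  set R : Fin n → ℝ := fun i => ∑ j ∈ Finset.Ico 2 N, hv j i with hRdef
  have hhuR : h = u + R := by
    funext i
    have h1 := hpart i
    rw [Finset.range_eq_Ico] at h1
    rw [← Finset.sum_Ico_consecutive (fun j => hv j i) (by omega : 0 ≤ 2) hNge2] at h1
    have h2 : ∑ j ∈ Finset.Ico 0 2, hv j i = hv 0 i + hv 1 i := by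
      rw [show Finset.Ico 0 2 = {0, 1} from rfl]
      simp
    simp only [Pi.add_apply]
    rw [hudef, hRdef]
    simp only []
    linarith [h1, h2.symm.le, h2.le]
  have hAR : A.mulVec R = ∑ j ∈ Finset.Ico 2 N, A.mulVec (hv j) := by
    have hReq : R = ∑ j ∈ Finset.Ico 2 N, hv j := by
      funext i
      rw [hRdef]
      simp only []
      rw [Finset.sum_apply]
    calc A.mulVec R = A.mulVecLin R := (Matrix.mulVecLin_apply _ _).symm
      _ = ∑ j ∈ Finset.Ico 2 N, A.mulVecLin (hv j) := by
          rw [hReq]; exact map_sum A.mulVecLin hv (Finset.Ico 2 N)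
      _ = ∑ j ∈ Finset.Ico 2 N, A.mulVec (hv j) := by
          apply Finset.sum_congr rfl
          intro j _
          exact Matrix.mulVecLin_apply _ _
  have hAusum : ∀ jm, A.mulVec u jm = - ∑ j ∈ Finset.Ico 2 N, A.mulVec (hv j) jm := by
    intro jm
    have h1 : A.mulVec h = A.mulVec u + A.mulVec R := by
      rw [hhuR, Matrix.mulVec_add]
    have h2 : A.mulVec u jm + A.mulVec R jm = 0 := by
      have := congrFun h1 jm
      rw [hAh] at this
      simp only [Pi.add_apply, Pi.zero_apply] at this
      linarith [this.symm.le, this.le]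
    have h3 : A.mulVec R jm = ∑ j ∈ Finset.Ico 2 N, A.mulVec (hv j) jm := by
      rw [hAR, Finset.sum_apply]
    linarith [h2, h3.le, h3.ge]
  -- the quadratic form computation
  have hQusum : ∑ jm, (A.mulVec u jm)^2
      = - ∑ j ∈ Finset.Ico 2 N, ∑ jm, A.mulVec u jm * A.mulVec (hv j) jm := by
    calc ∑ jm, (A.mulVec u jm)^2
        = ∑ jm, A.mulVec u jm * (- ∑ j ∈ Finset.Ico 2 N, A.mulVec (hv j) jm) := by
          apply Finset.sum_congr rfl
          intro jm _
          rw [← hAusum jm]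
          ring
      _ = - ∑ jm, ∑ j ∈ Finset.Ico 2 N, A.mulVec u jm * A.mulVec (hv j) jm := by
          rw [← Finset.sum_neg_distrib]
          apply Finset.sum_congr rfl
          intro jm _
          rw [mul_neg, Finset.mul_sum]
      _ = - ∑ j ∈ Finset.Ico 2 N, ∑ jm, A.mulVec u jm * A.mulVec (hv j) jm := by
          rw [Finset.sum_comm]
  have havrw : ∀ l, Real.sqrt (sq l) = av l := fun l => rfl
  have hcross : ∀ j ∈ Finset.Ico 2 N,
      - (∑ jm, A.mulVec u jm * A.mulVec (hv j) jm) ≤ δ * (av 0 + av 1) * av j := by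
    intro j hj
    simp only [Finset.mem_Ico] at hj
    have hsplitu : ∀ jm, A.mulVec u jm = A.mulVec (hv 0) jm + A.mulVec (hv 1) jm := by
      intro jm
      have : u = hv 0 + hv 1 := by
        funext i; simp only [hudef, Pi.add_apply]
      rw [this, Matrix.mulVec_add]
      simp
    have hBsplit : ∑ jm, A.mulVec u jm * A.mulVec (hv j) jm
        = (∑ jm, A.mulVec (hv 0) jm * A.mulVec (hv j) jm)
          + (∑ jm, A.mulVec (hv 1) jm * A.mulVec (hv j) jm) := by
      rw [← Finset.sum_add_distrib]
      apply Finset.sum_congr rfl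
      intro jm _
      rw [hsplitu jm]
      ring
    have hc0 := aux_cross A δ hRIP (hv 0) (hv j) (T 0) (T j) (hsupp 0) (hsupp j)
      (by have := hTcard 0; have := hTcard j; omega) (hdisjT 0 j (by omega))
    have hc1 := aux_cross A δ hRIP (hv 1) (hv j) (T 1) (T j) (hsupp 1) (hsupp j)
      (by have := hTcard 1; have := hTcard j; omega) (hdisjT 1 j (by omega))
    rw [hvsum 0, hvsum j, havrw 0, havrw j] at hc0
    rw [hvsum 1, hvsum j, havrw 1, havrw j] at hc1
    have habs0 := neg_abs_le (∑ jm, A.mulVec (hv 0) jm * A.mulVec (hv j) jm)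
    have habs1 := neg_abs_le (∑ jm, A.mulVec (hv 1) jm * A.mulVec (hv j) jm)
    rw [hBsplit]
    nlinarith [hc0, hc1]
  have hQub : ∑ jm, (A.mulVec u jm)^2 ≤ δ * (av 0 + av 1) * Sa := by
    rw [hQusum]
    have h1 : - ∑ j ∈ Finset.Ico 2 N, ∑ jm, A.mulVec u jm * A.mulVec (hv j) jm
        = ∑ j ∈ Finset.Ico 2 N, - ∑ jm, A.mulVec u jm * A.mulVec (hv j) jm := by
      rw [Finset.sum_neg_distrib]
    rw [h1]
    calc ∑ j ∈ Finset.Ico 2 N, - ∑ jm, A.mulVec u jm * A.mulVec (hv j) jm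
        ≤ ∑ j ∈ Finset.Ico 2 N, δ * (av 0 + av 1) * av j :=
          Finset.sum_le_sum hcross
      _ = δ * (av 0 + av 1) * Sa := by
          rw [hSadef, Finset.mul_sum]
  -- RIP lower bound
  have hlow := (hRIP u hu_sp).1
  rw [husum] at hlow
  -- final scalar contradiction
  have ha2 : (av 0)^2 = sq 0 := Real.sq_sqrt (hsqnn 0)
  have hb2' : (av 1)^2 = sq 1 := Real.sq_sqrt (hsqnn 1)
  have hstep1 : (1 - δ) * ((av 0)^2 + (av 1)^2) ≤ δ * (av 0 + av 1) * Sa := by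
    rw [ha2, hb2']
    exact le_trans hlow hQub
  have hb2k : (av 1)^2 * (sk*sk) ≤ p 0 * p 1 := by
    rw [hb2']
    have hss : sk*sk = (k:ℝ) := by rw [← hsk2]; ring
    rw [hss]
    exact hb2
  exact aux_final δ sk (av 0) (av 1) (p 0) (p 1) Sa hδ0 (by rw [← hs6]; exact hδs) hskpos
    hav0pos (havnn 1) hba (hpnn 0) (hpnn 1) hSab hp0a hb2k hstep1
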